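/- For every even integer n ≥ 8, (1 + 1/n)^(n/2) < (1/√e)·Σ_{i=0}^{n/2 - 1} 1/i!. -/

import Mathlib

set_option maxHeartbeats 1000000

lemma aux_nat : ∀ m : ℕ, 4 ≤ m → 10*(m+1)*(8*m+5) ≤ 27*(m*Nat.factorial m) := by
  intro m hm
  induction m with
  | zero => omega
  | succ k ih =>
    rcases Nat.lt_or_ge k 4 with hk | hk
    · interval_cases k <;> simp [Nat.factorial] <;> omega
    · have h1 := ih hk
      have h2 : Nat.factorial (k+1) = (k+1) * Nat.factorial k := rfl
      have h3 := Nat.factorial_pos k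
      nlinarith [h1, h3]

theorem stmt_16 (n : ℕ) (hn : Even n) (hn8 : 8 ≤ n) :
    (1 + 1 / (n : ℝ)) ^ (n / 2) <
      (Real.sqrt (Real.exp 1))⁻¹ *
        ∑ i ∈ Finset.range (n / 2), (1 : ℝ) / i.factorial := by
  obtain ⟨k, hk⟩ := hn
  set m := n / 2 with hmdef
  clear_value m
  have hnm : n = 2 * m := by omega
  have hm4 : 4 ≤ m := by omega
  have hM : (4:ℝ) ≤ (m:ℝ) := by exact_mod_cast hm4
  have hMpos : (0:ℝ) < (m:ℝ) := by linarith
  have hnR : (n:ℝ) = 2 * (m:ℝ) := by rw [hnm]; push_cast; ring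
  set y : ℝ := 1 / (2 * (m:ℝ)) with hy
  have hy_pos : 0 < y := by positivity
  have h1y : (0:ℝ) < 1 + y := by linarith
  -- sqrt(e) = exp(1/2)
  have hsqrt : Real.sqrt (Real.exp 1) = Real.exp (1/2) := by
    rw [show Real.exp 1 = Real.exp (1/2) ^ 2 by
      rw [← Real.exp_nat_mul]; norm_num, Real.sqrt_sq (Real.exp_pos _).le]
  -- Step A : (1+y)^m ≤ exp(1/2) * (8m+4)/(8m+5)
  set s : ℝ := y^2 / (2*(1+y)) with hs
  have hs_pos : 0 < s := by positivity
  have hfac : (1+y)*(1+s) = 1 + y + y^2/2 := by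
    rw [hs]
    field_simp
  have hA1 : (1+y)*(1+s) ≤ Real.exp y := by
    rw [hfac]; exact Real.quadratic_le_exp_of_nonneg hy_pos.le
  have hA2 : ((1+y)*(1+s))^m ≤ Real.exp (1/2) := by
    calc ((1+y)*(1+s))^m ≤ (Real.exp y)^m := by
          apply pow_le_pow_left₀ (by positivity) hA1
      _ = Real.exp ((m:ℝ) * y) := by rw [← Real.exp_nat_mul]
      _ = Real.exp (1/2) := by
          congr 1
          rw [hy]
          field_simp
  have hms : (m:ℝ) * s = 1 / (8*(m:ℝ)+4) := by
    rw [hs, hy]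
    field_simp
    ring
  have hbern : 1 + (m:ℝ) * s ≤ (1+s)^m := by
    exact one_add_mul_le_pow (by linarith) m
  have hA : (1+y)^m * ((8*(m:ℝ)+5)/(8*(m:ℝ)+4)) ≤ Real.exp (1/2) := by
    have h85 : 1 + (m:ℝ)*s = (8*(m:ℝ)+5)/(8*(m:ℝ)+4) := by
      rw [hms]; field_simp; ring
    have hpowpos : (0:ℝ) < (1+y)^m := by positivity
    calc (1+y)^m * ((8*(m:ℝ)+5)/(8*(m:ℝ)+4))
        = (1+y)^m * (1 + (m:ℝ)*s) := by rw [h85]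
      _ ≤ (1+y)^m * (1+s)^m := by
          apply mul_le_mul_of_nonneg_left hbern (by positivity)
      _ = ((1+y)*(1+s))^m := by rw [mul_pow]
      _ ≤ Real.exp (1/2) := hA2
  -- Step B : exp 1 - (m+1)/(m! * m) ≤ Σ
  have hB : Real.exp 1 - ((m:ℝ)+1) / ((Nat.factorial m) * m) ≤
      ∑ i ∈ Finset.range m, (1 : ℝ) / i.factorial := by
    have h := Real.exp_bound (x := 1) (by norm_num) (n := m) (by omega)
    simp only [one_pow, abs_one] at h
    have h' := (abs_sub_le_iff.1 h).1
    push_cast at h' ⊢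
    linarith
  -- Step C : key numeric inequality
  have hfactpos : (0:ℝ) < (Nat.factorial m : ℝ) := by positivity
  have hC : (((m:ℝ)+1) * (8*(m:ℝ)+5)) < Real.exp 1 * ((Nat.factorial m : ℝ) * m) := by
    have haux := aux_nat m hm4
    have hauxR : 10*((m:ℝ)+1)*(8*(m:ℝ)+5) ≤ 27*((m:ℝ)*(Nat.factorial m : ℝ)) := by
      exact_mod_cast haux
    have he : (2.7 : ℝ) < Real.exp 1 := by
      have := Real.exp_one_gt_d9; linarith
    nlinarith [mul_pos hfactpos hMpos]
  -- combine
  have h85pos : (0:ℝ) < 8*(m:ℝ)+5 := by linarith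
  have h84pos : (0:ℝ) < 8*(m:ℝ)+4 := by linarith
  have hexp2 : Real.exp (1/2) * Real.exp (1/2) = Real.exp 1 := by
    rw [← Real.exp_add]; norm_num
  have hgoal : (1+y)^m < (Real.exp (1/2))⁻¹ * ∑ i ∈ Finset.range m, (1 : ℝ) / i.factorial := by
    rw [lt_inv_mul_iff₀ (Real.exp_pos _)]
    -- need exp(1/2) * (1+y)^m < Σ
    have hstep : Real.exp (1/2) * (1+y)^m ≤ Real.exp 1 * ((8*(m:ℝ)+4)/(8*(m:ℝ)+5)) := by
      have := mul_le_mul_of_nonneg_left hA (Real.exp_pos (1/2)).le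
      have hrw : Real.exp (1/2) * ((1+y)^m * ((8*(m:ℝ)+5)/(8*(m:ℝ)+4))) =
          (Real.exp (1/2) * (1+y)^m) * ((8*(m:ℝ)+5)/(8*(m:ℝ)+4)) := by ring
      rw [hrw] at this
      calc Real.exp (1/2) * (1+y)^m
          = (Real.exp (1/2) * (1+y)^m) * ((8*(m:ℝ)+5)/(8*(m:ℝ)+4)) * ((8*(m:ℝ)+4)/(8*(m:ℝ)+5)) := by
            field_simp
        _ ≤ Real.exp (1/2) * Real.exp (1/2) * ((8*(m:ℝ)+4)/(8*(m:ℝ)+5)) := by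
            apply mul_le_mul_of_nonneg_right this (by positivity)
        _ = Real.exp 1 * ((8*(m:ℝ)+4)/(8*(m:ℝ)+5)) := by rw [hexp2]
    have hfin : Real.exp 1 * ((8*(m:ℝ)+4)/(8*(m:ℝ)+5)) <
        Real.exp 1 - ((m:ℝ)+1) / ((Nat.factorial m) * m) := by
      have hT : ((m:ℝ)+1)/((Nat.factorial m : ℝ)*m) < Real.exp 1/(8*(m:ℝ)+5) := by
        rw [div_lt_div_iff₀ (by positivity) h85pos]
        nlinarith [hC]
      have heq : Real.exp 1 * ((8*(m:ℝ)+4)/(8*(m:ℝ)+5)) =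
          Real.exp 1 - Real.exp 1/(8*(m:ℝ)+5) := by
        field_simp
        ring
      rw [heq]
      linarith
    linarith [hB]
  calc (1 + 1/(n:ℝ))^m = (1+y)^m := by rw [hnR, hy]
    _ < (Real.exp (1/2))⁻¹ * ∑ i ∈ Finset.range m, (1 : ℝ) / i.factorial := hgoal
    _ = (Real.sqrt (Real.exp 1))⁻¹ * ∑ i ∈ Finset.range m, (1 : ℝ) / i.factorial := by
        rw [hsqrt]
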